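/- There exists a constant C, independent of h, such that ‖Δ̃_h u‖₋₁ ≤ C‖∇u‖ for every u ∈ H¹(Ω). -/

import Mathlib

open MeasureTheory Set

noncomputable section

/-- Points of the plane. -/
abbrev Pt : Type := ℝ × ℝ

/-- Partial derivative in the `x` direction. -/
def pdx (f : Pt → ℝ) (p : Pt) : ℝ := fderiv ℝ f p (1, 0)

/-- Partial derivative in the `y` direction. -/
def pdy (f : Pt → ℝ) (p : Pt) : ℝ := fderiv ℝ f p (0, 1)

/-- Laplacian. -/
def lap (f : Pt → ℝ) (p : Pt) : ℝ := pdx (pdx f) p + pdy (pdy f) p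

/-- Pointwise time derivative of a time-dependent function. -/
def tderiv (f : ℝ → Pt → ℝ) (t : ℝ) (p : Pt) : ℝ := deriv (fun s => f s p) t

/-- Pointwise iterated time derivative. -/
def tderivIter (k : ℕ) (f : ℝ → Pt → ℝ) (t : ℝ) (p : Pt) : ℝ :=
  iteratedDeriv k (fun s => f s p) t

/-- Membership in `L²(Ω)`. -/
def MemL2 (Ω : Set Pt) (f : Pt → ℝ) : Prop :=
  Integrable (fun p => f p ^ 2) (volume.restrict Ω)

/-- Membership in the Sobolev space `H^k(Ω)` (square-integrability of all
derivatives of order `≤ k`). -/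
def MemH (Ω : Set Pt) (k : ℕ) (f : Pt → ℝ) : Prop :=
  ∀ i ≤ k, Integrable (fun p => ‖iteratedFDeriv ℝ i f p‖ ^ 2) (volume.restrict Ω)

/-- The `L²(Ω)` norm. -/
def L2norm (Ω : Set Pt) (f : Pt → ℝ) : ℝ := Real.sqrt (∫ p in Ω, f p ^ 2)

/-- The `H^k(Ω)` norm. -/
def HNorm (Ω : Set Pt) (k : ℕ) (f : Pt → ℝ) : ℝ :=
  Real.sqrt (∑ i ∈ Finset.range (k + 1), ∫ p in Ω, ‖iteratedFDeriv ℝ i f p‖ ^ 2)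

/-- Membership in `H¹₀(Ω)`: in `H¹(Ω)` with vanishing trace on `∂Ω`. -/
def MemH10 (Ω : Set Pt) (w : Pt → ℝ) : Prop :=
  MemH Ω 1 w ∧ ∀ p ∈ frontier Ω, w p = 0

/-- The `L²(Ω)` inner product. -/
def L2inner (Ω : Set Pt) (f g : Pt → ℝ) : ℝ := ∫ p in Ω, f p * g p

/-- Pointwise dot product of gradients, `∇f · ∇g`. -/
def gradDot (f g : Pt → ℝ) (p : Pt) : ℝ := pdx f p * pdx g p + pdy f p * pdy g p

/-- The bilinear form `a(u,v) = (u,v) + b(∇u,∇v)` (this is `a_D` on `H¹₀ × H¹₀`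
and `a_N` on `H¹ × H¹`). -/
def aForm (Ω : Set Pt) (b : ℝ) (f g : Pt → ℝ) : ℝ :=
  L2inner Ω f g + b * ∫ p in Ω, gradDot f g p

/-- The negative norm `‖w‖₋₁ = sup{(w,z)/‖z‖₁ : 0 ≠ z ∈ H¹(Ω)}`. -/
def negNorm1 (Ω : Set Pt) (w : Pt → ℝ) : ℝ :=
  sSup ((fun z => L2inner Ω w z / HNorm Ω 1 z) ''
    {z : Pt → ℝ | MemH Ω 1 z ∧ HNorm Ω 1 z ≠ 0})

/-- The negative norm `‖w‖₋₂ = sup{(w,z)/‖z‖₂ : 0 ≠ z ∈ H²(Ω) ∩ H¹₀(Ω)}`. -/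
def negNorm2 (Ω : Set Pt) (w : Pt → ℝ) : ℝ :=
  sSup ((fun z => L2inner Ω w z / HNorm Ω 2 z) ''
    {z : Pt → ℝ | MemH Ω 2 z ∧ (∀ p ∈ frontier Ω, z p = 0) ∧ HNorm Ω 2 z ≠ 0})

/-- The `L^∞(Ω)` norm. -/
def LinfNorm (Ω : Set Pt) (f : Pt → ℝ) : ℝ := sSup ((fun p => |f p|) '' Ω)

lemma mul_integrable {α : Type*} [MeasurableSpace α] {μ : Measure α} {f g : α → ℝ}
    (hfm : AEStronglyMeasurable f μ) (hgm : AEStronglyMeasurable g μ)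
    (hf2 : Integrable (fun p => f p ^ 2) μ) (hg2 : Integrable (fun p => g p ^ 2) μ) :
    Integrable (fun p => f p * g p) μ := by
  refine Integrable.mono' ((hf2.add hg2).const_mul (1/2)) (hfm.mul hgm) ?_
  filter_upwards with p
  simp only [Pi.add_apply, Real.norm_eq_abs]
  nlinarith [abs_mul (f p) (g p), sq_nonneg (|f p| - |g p|), sq_abs (f p), sq_abs (g p),
    abs_nonneg (f p), abs_nonneg (g p)]

lemma integral_CS {α : Type*} [MeasurableSpace α] {μ : Measure α} {f g : α → ℝ}
    (hfm : AEStronglyMeasurable f μ) (hgm : AEStronglyMeasurable g μ)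
    (hf2 : Integrable (fun p => f p ^ 2) μ) (hg2 : Integrable (fun p => g p ^ 2) μ) :
    ∫ p, f p * g p ∂μ ≤ Real.sqrt (∫ p, f p ^ 2 ∂μ) * Real.sqrt (∫ p, g p ^ 2 ∂μ) := by
  set A := ∫ p, f p ^ 2 ∂μ with hA
  set B := ∫ p, g p ^ 2 ∂μ with hB
  have hA0 : 0 ≤ A := integral_nonneg fun p => sq_nonneg _
  have hB0 : 0 ≤ B := integral_nonneg fun p => sq_nonneg _
  have hfg : Integrable (fun p => f p * g p) μ := mul_integrable hfm hgm hf2 hg2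
  rcases eq_or_lt_of_le hB0 with hBz | hBpos
  · have : (fun p => g p ^ 2) =ᵐ[μ] 0 := by
      rw [← integral_eq_zero_iff_of_nonneg (fun p => sq_nonneg _) hg2, ← hB, ← hBz]
    have hfg0 : (fun p => f p * g p) =ᵐ[μ] 0 := by
      filter_upwards [this] with p hp
      have : g p = 0 := by simpa [pow_eq_zero_iff] using hp
      simp [this]
    rw [integral_congr_ae hfg0]
    simp [mul_nonneg (Real.sqrt_nonneg A) (Real.sqrt_nonneg B)]
  · set t : ℝ := (∫ p, f p * g p ∂μ) / B with ht
    set I : ℝ := ∫ p, f p * g p ∂μ with hI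
    have key : 0 ≤ A - 2 * t * I + t ^ 2 * B := by
      have hI1 : Integrable (fun p => f p ^ 2 - 2 * t * (f p * g p)) μ :=
        hf2.sub (hfg.const_mul (2 * t))
      have h2 : (0:ℝ) ≤ ∫ p, (f p - t * g p) ^ 2 ∂μ := integral_nonneg fun p => sq_nonneg _
      have e : ∀ p, (f p - t * g p) ^ 2
          = f p ^ 2 - 2 * t * (f p * g p) + t ^ 2 * g p ^ 2 := fun p => by ring
      have e1 : (∫ p, (f p ^ 2 - 2 * t * (f p * g p) + t ^ 2 * g p ^ 2) ∂μ)
          = (∫ p, (f p ^ 2 - 2 * t * (f p * g p)) ∂μ) + ∫ p, t ^ 2 * g p ^ 2 ∂μ :=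
        integral_add hI1 (hg2.const_mul (t ^ 2))
      have e2 : (∫ p, (f p ^ 2 - 2 * t * (f p * g p)) ∂μ)
          = A - ∫ p, 2 * t * (f p * g p) ∂μ := integral_sub hf2 (hfg.const_mul (2 * t))
      have e3 : (∫ p, 2 * t * (f p * g p) ∂μ) = 2 * t * I := integral_const_mul _ _
      have e4 : (∫ p, t ^ 2 * g p ^ 2 ∂μ) = t ^ 2 * B := integral_const_mul _ _
      simp_rw [e] at h2
      linarith
    have hsq : I ^ 2 ≤ A * B := by
      have hBne : B ≠ 0 := ne_of_gt hBpos
      have e : A - 2 * t * I + t ^ 2 * B = A - I ^ 2 / B := by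
        rw [ht]; field_simp; ring
      rw [e] at key
      have : I ^ 2 / B ≤ A := by linarith
      calc I ^ 2 = I ^ 2 / B * B := by field_simp
        _ ≤ A * B := mul_le_mul_of_nonneg_right this hB0
    calc I ≤ |I| := le_abs_self _
      _ = Real.sqrt (I ^ 2) := (Real.sqrt_sq_eq_abs _).symm
      _ ≤ Real.sqrt (A * B) := Real.sqrt_le_sqrt hsq
      _ = Real.sqrt A * Real.sqrt B := Real.sqrt_mul hA0 B

lemma pdx_le (f : Pt → ℝ) (p : Pt) : |pdx f p| ≤ ‖iteratedFDeriv ℝ 1 f p‖ := by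
  have h := (iteratedFDeriv ℝ 1 f p).le_opNorm (fun _ => ((1:ℝ), (0:ℝ)))
  rw [iteratedFDeriv_one_apply] at h
  have hn : ‖((1:ℝ), (0:ℝ))‖ = 1 := by simp [Prod.norm_def]
  simpa [pdx, Real.norm_eq_abs, hn] using h

lemma pdy_le (f : Pt → ℝ) (p : Pt) : |pdy f p| ≤ ‖iteratedFDeriv ℝ 1 f p‖ := by
  have h := (iteratedFDeriv ℝ 1 f p).le_opNorm (fun _ => ((0:ℝ), (1:ℝ)))
  rw [iteratedFDeriv_one_apply] at h
  have hn : ‖((0:ℝ), (1:ℝ))‖ = 1 := by simp [Prod.norm_def]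
  simpa [pdy, Real.norm_eq_abs, hn] using h

lemma gradDot_measurable (f g : Pt → ℝ) : Measurable (gradDot f g) := by
  have h1 : Measurable (pdx f) := measurable_fderiv_apply_const ℝ f (1, 0)
  have h2 : Measurable (pdy f) := measurable_fderiv_apply_const ℝ f (0, 1)
  have h3 : Measurable (pdx g) := measurable_fderiv_apply_const ℝ g (1, 0)
  have h4 : Measurable (pdy g) := measurable_fderiv_apply_const ℝ g (0, 1)
  exact ((h1.mul h3).add (h2.mul h4))

lemma gradDot_self_le (f : Pt → ℝ) (p : Pt) :
    gradDot f f p ≤ 2 * ‖iteratedFDeriv ℝ 1 f p‖ ^ 2 := by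
  have h1 := pdx_le f p
  have h2 := pdy_le f p
  have := abs_nonneg (pdx f p)
  unfold gradDot
  nlinarith [sq_abs (pdx f p), sq_abs (pdy f p), abs_nonneg (pdy f p)]

-- new helpers
lemma memL2_of_memH {Ω : Set Pt} {f : Pt → ℝ} (hf : MemH Ω 1 f) : MemL2 Ω f := by
  have h := hf 0 (by norm_num)
  have e : (fun p => f p ^ 2) = fun p => ‖iteratedFDeriv ℝ 0 f p‖ ^ 2 := by
    funext p; rw [norm_iteratedFDeriv_zero, Real.norm_eq_abs, sq_abs]
  rw [MemL2, e]; exact h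

lemma grad_sq_integrable {Ω : Set Pt} {f : Pt → ℝ} (hf : MemH Ω 1 f) :
    Integrable (fun p => gradDot f f p) (volume.restrict Ω) := by
  refine Integrable.mono' ((hf 1 le_rfl).const_mul 2)
    (gradDot_measurable f f).aestronglyMeasurable ?_
  filter_upwards with p
  rw [Real.norm_eq_abs]
  have h1 := gradDot_self_le f p
  have h2 : 0 ≤ gradDot f f p := by
    unfold gradDot; nlinarith [sq_nonneg (pdx f p), sq_nonneg (pdy f p)]
  rw [abs_of_nonneg h2]; exact h1

lemma gradDot_self_nonneg (f : Pt → ℝ) (p : Pt) : 0 ≤ gradDot f f p := by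
  unfold gradDot; nlinarith [sq_nonneg (pdx f p), sq_nonneg (pdy f p)]

lemma neg_gradDot_le (u v : Pt → ℝ) (p : Pt) :
    -gradDot u v p ≤ Real.sqrt (gradDot u u p) * Real.sqrt (gradDot v v p) := by
  unfold gradDot
  set a := pdx u p; set b := pdy u p; set c := pdx v p; set d := pdy v p
  have hX : 0 ≤ a * a + b * b := by nlinarith [sq_nonneg a, sq_nonneg b]
  have hY : 0 ≤ c * c + d * d := by nlinarith [sq_nonneg c, sq_nonneg d]
  have hr : 0 ≤ Real.sqrt (a*a+b*b) * Real.sqrt (c*c+d*d) :=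
    mul_nonneg (Real.sqrt_nonneg _) (Real.sqrt_nonneg _)
  have hr2 : (Real.sqrt (a*a+b*b) * Real.sqrt (c*c+d*d)) ^ 2 = (a*a+b*b) * (c*c+d*d) := by
    rw [mul_pow, Real.sq_sqrt hX, Real.sq_sqrt hY]
  have hs2 : (a*c + b*d) ^ 2 ≤ (a*a+b*b) * (c*c+d*d) := by nlinarith [sq_nonneg (a*d - b*c)]
  nlinarith [hr, hr2, hs2]

lemma sqrt_grad_le_HNorm {Ω : Set Pt} {f : Pt → ℝ} (hf : MemH Ω 1 f) :
    Real.sqrt (∫ p in Ω, gradDot f f p) ≤ Real.sqrt 2 * HNorm Ω 1 f := by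
  have h1 : (∫ p in Ω, gradDot f f p) ≤ ∫ p in Ω, 2 * ‖iteratedFDeriv ℝ 1 f p‖ ^ 2 :=
    integral_mono (grad_sq_integrable hf) ((hf 1 le_rfl).const_mul 2)
      fun p => gradDot_self_le f p
  have h2 : (∫ p in Ω, 2 * ‖iteratedFDeriv ℝ 1 f p‖ ^ 2)
      = 2 * ∫ p in Ω, ‖iteratedFDeriv ℝ 1 f p‖ ^ 2 := integral_const_mul _ _
  have h0 : 0 ≤ ∫ p in Ω, ‖iteratedFDeriv ℝ 0 f p‖ ^ 2 := integral_nonneg fun p => sq_nonneg _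
  have h3 : (∫ p in Ω, gradDot f f p)
      ≤ 2 * ∑ i ∈ Finset.range 2, ∫ p in Ω, ‖iteratedFDeriv ℝ i f p‖ ^ 2 := by
    rw [Finset.sum_range_succ, Finset.sum_range_one]
    linarith
  calc Real.sqrt (∫ p in Ω, gradDot f f p)
      ≤ Real.sqrt (2 * ∑ i ∈ Finset.range 2, ∫ p in Ω, ‖iteratedFDeriv ℝ i f p‖ ^ 2) :=
        Real.sqrt_le_sqrt h3
    _ = Real.sqrt 2 * HNorm Ω 1 f := by
        rw [HNorm, Real.sqrt_mul (by norm_num : (0:ℝ) ≤ 2)]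


/-- **Lemma 3.3.** There is a constant `C`, independent of `h`, such that
`‖Δ̃_h u‖₋₁ ≤ C‖∇u‖` for every `u ∈ H¹(Ω)`, where the discrete Laplacian
`Δ̃_h : H¹ → S̃_h` is defined by `(Δ̃_h w, χ) = −(∇w, ∇χ)` for all `χ ∈ S̃_h`,
and the `L²`-projection `P̃_h` onto `S̃_h` is stable on `H¹`. -/
theorem discrete_laplacian_negative_norm
    (Ω : Set Pt) (hΩo : IsOpen Ω) (hΩb : Bornology.IsBounded Ω)
    (hΩc : Convex ℝ Ω) (hΩne : Ω.Nonempty)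
    (r : ℕ) (hr : 2 ≤ r)
    (St : ℝ → Submodule ℝ (Pt → ℝ))
    (hStreg : ∀ h > (0 : ℝ), ∀ f ∈ St h, MemH Ω 1 f ∧ ContinuousOn f (closure Ω))
    -- the discrete Laplacian `Δ̃_h`
    (Dh : ℝ → (Pt → ℝ) → Pt → ℝ)
    (hDhmem : ∀ h > (0 : ℝ), ∀ w : Pt → ℝ, Dh h w ∈ St h)
    (hDh : ∀ h > (0 : ℝ), ∀ w : Pt → ℝ, MemH Ω 1 w → ∀ χ ∈ St h,
      L2inner Ω (Dh h w) χ = -(∫ p in Ω, gradDot w χ p))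
    -- the `L²` projection `P̃_h` onto `S̃_h` and its `H¹` stability
    (Ph : ℝ → (Pt → ℝ) → Pt → ℝ)
    (hPhmem : ∀ h > (0 : ℝ), ∀ w : Pt → ℝ, Ph h w ∈ St h)
    (hPh : ∀ h > (0 : ℝ), ∀ w : Pt → ℝ, MemL2 Ω w → ∀ χ ∈ St h,
      L2inner Ω (fun p => w p - Ph h w p) χ = 0)
    (Cp : ℝ)
    (hPstab : ∀ h > (0 : ℝ), ∀ w : Pt → ℝ, MemH Ω 1 w →
      HNorm Ω 1 (Ph h w) ≤ Cp * HNorm Ω 1 w) :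
    ∃ C : ℝ, 0 < C ∧ ∀ h > (0 : ℝ), ∀ u : Pt → ℝ, MemH Ω 1 u →
      negNorm1 Ω (Dh h u) ≤ C * Real.sqrt (∫ p in Ω, gradDot u u p) := by
  refine ⟨Real.sqrt 2 * |Cp| + 1, by positivity, fun h hh u hu => ?_⟩
  set C := Real.sqrt 2 * |Cp| + 1 with hC
  set A := Real.sqrt (∫ p in Ω, gradDot u u p) with hA
  have hA0 : 0 ≤ A := Real.sqrt_nonneg _
  have hRHS0 : 0 ≤ C * A := by positivity
  refine Real.sSup_le ?_ hRHS0
  rintro x ⟨z, ⟨hz1, hz2⟩, rfl⟩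
  have hzpos : 0 < HNorm Ω 1 z := lt_of_le_of_ne (Real.sqrt_nonneg _) (Ne.symm hz2)
  rw [div_le_iff₀ hzpos]
  -- main estimate: L2inner Ω (Dh h u) z ≤ C * A * HNorm Ω 1 z
  by_cases hint : Integrable (fun p => Dh h u p * z p) (volume.restrict Ω)
  · set χ := Dh h u with hχ
    set v := Ph h z with hv
    have hχSt : χ ∈ St h := hDhmem h hh u
    have hvSt : v ∈ St h := hPhmem h hh z
    have hχreg := hStreg h hh χ hχSt
    have hvreg := hStreg h hh v hvSt
    have hΩm : MeasurableSet Ω := hΩo.measurableSet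
    have hχm : AEStronglyMeasurable χ (volume.restrict Ω) :=
      (hχreg.2.mono subset_closure).aestronglyMeasurable hΩm
    have hvm : AEStronglyMeasurable v (volume.restrict Ω) :=
      (hvreg.2.mono subset_closure).aestronglyMeasurable hΩm
    -- projection step
    have hz2int : MemL2 Ω z := memL2_of_memH hz1
    have hproj := hPh h hh z hz2int χ hχSt
    have hzχint : Integrable (fun p => z p * χ p) (volume.restrict Ω) := by
      have e : (fun p => z p * χ p) = fun p => Dh h u p * z p := by
        funext p; rw [mul_comm]
      rw [e]; exact hint
    have hvχint : Integrable (fun p => v p * χ p) (volume.restrict Ω) :=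
      mul_integrable hvm hχm (memL2_of_memH hvreg.1) (memL2_of_memH hχreg.1)
    have hsplit : (∫ p in Ω, (z p - v p) * χ p)
        = (∫ p in Ω, z p * χ p) - ∫ p in Ω, v p * χ p := by
      have e : ∀ p, (z p - v p) * χ p = z p * χ p - v p * χ p := fun p => by ring
      simp_rw [e]
      exact integral_sub hzχint hvχint
    have heq1 : L2inner Ω χ z = L2inner Ω χ v := by
      rw [L2inner] at hproj ⊢
      rw [hsplit] at hproj
      have e1 : (∫ p in Ω, χ p * z p) = ∫ p in Ω, z p * χ p := by
        congr 1; funext p; ring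
      have e2 : (∫ p in Ω, χ p * v p) = ∫ p in Ω, v p * χ p := by
        congr 1; funext p; ring
      rw [L2inner, e1, e2]; linarith
    have heq2 : L2inner Ω χ v = -(∫ p in Ω, gradDot u v p) := hDh h hh u hu v hvSt
    -- Cauchy-Schwarz on the gradient term
    have huv_int : Integrable (fun p => gradDot u v p) (volume.restrict Ω) := by
      refine Integrable.mono' (((grad_sq_integrable hu).add
        (grad_sq_integrable hvreg.1)).const_mul (1/2))
        (gradDot_measurable u v).aestronglyMeasurable ?_
      filter_upwards with p
      simp only [Pi.add_apply, Real.norm_eq_abs]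
      unfold gradDot
      rw [abs_le]
      constructor <;>
        nlinarith [sq_nonneg (pdx u p - pdx v p), sq_nonneg (pdy u p - pdy v p),
          sq_nonneg (pdx u p + pdx v p), sq_nonneg (pdy u p + pdy v p)]
    set F := fun p => Real.sqrt (gradDot u u p) with hF
    set G := fun p => Real.sqrt (gradDot v v p) with hG
    have hF2 : (fun p => F p ^ 2) = fun p => gradDot u u p := by
      funext p; exact Real.sq_sqrt (gradDot_self_nonneg u p)
    have hG2 : (fun p => G p ^ 2) = fun p => gradDot v v p := by
      funext p; exact Real.sq_sqrt (gradDot_self_nonneg v p)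
    have hFm : AEStronglyMeasurable F (volume.restrict Ω) :=
      ((gradDot_measurable u u).sqrt).aestronglyMeasurable
    have hGm : AEStronglyMeasurable G (volume.restrict Ω) :=
      ((gradDot_measurable v v).sqrt).aestronglyMeasurable
    have hF2i : Integrable (fun p => F p ^ 2) (volume.restrict Ω) := by
      rw [hF2]; exact grad_sq_integrable hu
    have hG2i : Integrable (fun p => G p ^ 2) (volume.restrict Ω) := by
      rw [hG2]; exact grad_sq_integrable hvreg.1
    have hFGi : Integrable (fun p => F p * G p) (volume.restrict Ω) :=
      mul_integrable hFm hGm hF2i hG2i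
    have hCS1 : -(∫ p in Ω, gradDot u v p) ≤ ∫ p in Ω, F p * G p := by
      rw [← integral_neg]
      exact integral_mono huv_int.neg hFGi fun p => neg_gradDot_le u v p
    have hCS2 : (∫ p in Ω, F p * G p)
        ≤ Real.sqrt (∫ p in Ω, F p ^ 2) * Real.sqrt (∫ p in Ω, G p ^ 2) :=
      integral_CS hFm hGm hF2i hG2i
    have hCS3 : Real.sqrt (∫ p in Ω, F p ^ 2) = A := by rw [hF2, hA]
    have hCS4 : Real.sqrt (∫ p in Ω, G p ^ 2) ≤ Real.sqrt 2 * HNorm Ω 1 v := by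
      rw [hG2]; exact sqrt_grad_le_HNorm hvreg.1
    have hstab : HNorm Ω 1 v ≤ Cp * HNorm Ω 1 z := hPstab h hh z hz1
    have hvH0 : 0 ≤ HNorm Ω 1 v := Real.sqrt_nonneg _
    have hfinal : L2inner Ω χ z ≤ A * (Real.sqrt 2 * (Cp * HNorm Ω 1 z)) := by
      rw [heq1, heq2]
      calc -(∫ p in Ω, gradDot u v p) ≤ ∫ p in Ω, F p * G p := hCS1
        _ ≤ Real.sqrt (∫ p in Ω, F p ^ 2) * Real.sqrt (∫ p in Ω, G p ^ 2) := hCS2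
        _ = A * Real.sqrt (∫ p in Ω, G p ^ 2) := by rw [hCS3]
        _ ≤ A * (Real.sqrt 2 * HNorm Ω 1 v) := by
            exact mul_le_mul_of_nonneg_left hCS4 hA0
        _ ≤ A * (Real.sqrt 2 * (Cp * HNorm Ω 1 z)) := by
            refine mul_le_mul_of_nonneg_left ?_ hA0
            exact mul_le_mul_of_nonneg_left hstab (Real.sqrt_nonneg 2)
    have hCpC : Real.sqrt 2 * Cp ≤ C := by
      rw [hC]
      have : Real.sqrt 2 * Cp ≤ Real.sqrt 2 * |Cp| :=
        mul_le_mul_of_nonneg_left (le_abs_self Cp) (Real.sqrt_nonneg 2)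
      linarith
    calc L2inner Ω χ z ≤ A * (Real.sqrt 2 * (Cp * HNorm Ω 1 z)) := hfinal
      _ = (Real.sqrt 2 * Cp) * (A * HNorm Ω 1 z) := by ring
      _ ≤ C * (A * HNorm Ω 1 z) :=
          mul_le_mul_of_nonneg_right hCpC (mul_nonneg hA0 hzpos.le)
      _ = C * A * HNorm Ω 1 z := by ring
  · rw [L2inner, integral_undef hint]
    exact mul_nonneg hRHS0 hzpos.le
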